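/- There is a category M whose objects are the non-degenerate semigroups in C with multiplication in Q, whose morphisms A → B are the dense multiplicative M-morphisms A ⇸ B, with composition ∙ and identities i = (m, m). Moreover the monoidal unit I, equipped with its trivial (identity) multiplication, is an initial object of M. -/

import Mathlib

open CategoryTheory Category MonoidalCategory Limits

universe v u

variable {C : Type u} [Category.{v} C] [MonoidalCategory C]

/-- A semigroup multiplication is non-degenerate. -/
def NonDeg (A : C) (m : A ⊗ A ⟶ A) : Prop :=
  (∀ X Y : C, Function.Injective (fun f : X ⟶ Y ⊗ A =>
      (f ▷ A) ≫ (α_ Y A A).hom ≫ (Y ◁ m))) ∧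
  (∀ X Y : C, Function.Injective (fun g : X ⟶ A ⊗ Y =>
      (A ◁ g) ≫ (α_ A A Y).inv ≫ (m ▷ Y)))

/-- Associativity of a semigroup multiplication. -/
def SgAssoc (A : C) (m : A ⊗ A ⟶ A) : Prop :=
  (m ▷ A) ≫ m = (α_ A A A).hom ≫ (A ◁ m) ≫ m

/-- A pair (f₁, f₂) is an `𝕄`-morphism `A ⇸ B`: eq. (2). -/
def IsMMor {A B : C} (mB : B ⊗ B ⟶ B) (f₁ : A ⊗ B ⟶ B) (f₂ : B ⊗ A ⟶ B) : Prop :=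
  (f₂ ▷ B) ≫ mB = (α_ B A B).hom ≫ (B ◁ f₁) ≫ mB

/-- The first component of an `𝕄`-morphism is multiplicative. -/
def Mult₁ {A B : C} (mA : A ⊗ A ⟶ A) (f₁ : A ⊗ B ⟶ B) : Prop :=
  (mA ▷ B) ≫ f₁ = (α_ A A B).hom ≫ (A ◁ f₁) ≫ f₁

/-- The second component of an `𝕄`-morphism is multiplicative. -/
def Mult₂ {A B : C} (mA : A ⊗ A ⟶ A) (f₂ : B ⊗ A ⟶ B) : Prop :=
  (α_ B A A).hom ≫ (B ◁ mA) ≫ f₂ = (f₂ ▷ A) ≫ f₂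

/-- The standing assumptions on the class `Q` of regular epimorphisms. -/
structure QData (C : Type u) [Category.{v} C] [MonoidalCategory C] where
  Q : MorphismProperty C
  regEpi : ∀ ⦃X Y : C⦄ (f : X ⟶ Y), Q f → Nonempty (RegularEpi f)
  comp_mem : ∀ ⦃X Y Z : C⦄ (f : X ⟶ Y) (g : Y ⟶ Z), Q f → Q g → Q (f ≫ g)
  tensor_mem : ∀ ⦃X Y X' Y' : C⦄ (f : X ⟶ Y) (g : X' ⟶ Y'), Q f → Q g → Q (f ⊗ₘ g)
  iso_mem : ∀ ⦃X Y : C⦄ (f : X ⟶ Y), IsIso f → Q f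
  cancel : ∀ ⦃X Y Z : C⦄ (s : X ⟶ Y) (t : Y ⟶ Z), Q s → Q (s ≫ t) → Q t
  coeq : ∀ ⦃X Y : C⦄ (f : X ⟶ Y), Q f →
    ∃ (Z : C) (u v : Z ⟶ X) (h : u ≫ f = v ≫ f),
      Nonempty (IsColimit (Cofork.ofπ f h)) ∧
      (∀ W : C, Nonempty (IsColimit (Cofork.ofπ (f := W ◁ u) (g := W ◁ v) (W ◁ f)
        (by rw [← MonoidalCategory.whiskerLeft_comp, ← MonoidalCategory.whiskerLeft_comp, h])))) ∧
      (∀ W : C, Nonempty (IsColimit (Cofork.ofπ (f := u ▷ W) (g := v ▷ W) (f ▷ W)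
        (by rw [← MonoidalCategory.comp_whiskerRight, ← MonoidalCategory.comp_whiskerRight, h]))))

/-- An object of the category `ℳ`: a non-degenerate semigroup with multiplication in `Q`. -/
structure MObj {C : Type u} [Category.{v} C] [MonoidalCategory C] (QD : QData C) where
  A : C
  m : A ⊗ A ⟶ A
  assoc : SgAssoc A m
  nondeg : NonDeg A m
  mQ : QD.Q m

/-- A morphism of the category `ℳ`: a dense multiplicative `𝕄`-morphism. -/
@[ext]
structure MHom {C : Type u} [Category.{v} C] [MonoidalCategory C] {QD : QData C}
    (X Y : MObj QD) where
  f₁ : X.A ⊗ Y.A ⟶ Y.A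
  f₂ : Y.A ⊗ X.A ⟶ Y.A
  compat : IsMMor Y.m f₁ f₂
  mult₁ : Mult₁ X.m f₁
  mult₂ : Mult₂ X.m f₂
  dense₁ : QD.Q f₁
  dense₂ : QD.Q f₂

/-- The identity `𝕄`-morphism `i = (m, m)`. -/
def MObj.idM {QD : QData C} (X : MObj QD) : MHom X X where
  f₁ := X.m
  f₂ := X.m
  compat := X.assoc
  mult₁ := X.assoc
  mult₂ := X.assoc.symm
  dense₁ := X.mQ
  dense₂ := X.mQ

/-- The monoidal unit with its trivial multiplication, as an object of `ℳ`. -/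
def MObj.unit (QD : QData C) : MObj QD where
  A := 𝟙_ C
  m := (λ_ (𝟙_ C)).hom
  assoc := by
    dsimp [SgAssoc]
    monoidal
  nondeg := by
    constructor
    · intro X Y f g h
      have h' : f ▷ 𝟙_ C = g ▷ 𝟙_ C := by
        have this := h
        dsimp at this
        simp only [← Category.assoc] at this
        rw [cancel_mono] at this
        rwa [cancel_mono] at this
      rwa [MonoidalCategory.whiskerRight_id, MonoidalCategory.whiskerRight_id,
        cancel_epi, cancel_mono] at h'
    · intro X Y f g h
      have h' : 𝟙_ C ◁ f = 𝟙_ C ◁ g := by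
        have this := h
        dsimp at this
        simp only [← Category.assoc] at this
        rw [cancel_mono] at this
        rwa [cancel_mono] at this
      rwa [MonoidalCategory.id_whiskerLeft, MonoidalCategory.id_whiskerLeft,
        cancel_epi, cancel_mono] at h'
  mQ := QD.iso_mem _ inferInstance

section Aux
variable {QD : QData C}

lemma qEpi {X Y : C} {f : X ⟶ Y} (h : QD.Q f) : Epi f := by
  obtain ⟨r⟩ := QD.regEpi f h
  exact r.epi

lemma qWL {X Y : C} (W : C) {f : X ⟶ Y} (h : QD.Q f) : QD.Q (W ◁ f) := by
  rw [← MonoidalCategory.id_tensorHom]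
  exact QD.tensor_mem _ _ (QD.iso_mem _ inferInstance) h

lemma qWR {X Y : C} {f : X ⟶ Y} (h : QD.Q f) (W : C) : QD.Q (f ▷ W) := by
  rw [← MonoidalCategory.tensorHom_id]
  exact QD.tensor_mem _ _ h (QD.iso_mem _ inferInstance)

lemma descend_l {X Y T : C} {q : X ⟶ Y} (hq : QD.Q q) (W : C) (t : W ⊗ X ⟶ T)
    (H : ∀ (E : C) (u v : E ⟶ X), u ≫ q = v ≫ q → (W ◁ u) ≫ t = (W ◁ v) ≫ t) :
    ∃ s : W ⊗ Y ⟶ T, (W ◁ q) ≫ s = t := by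
  obtain ⟨Z, u, v, h, ⟨-, hl, -⟩⟩ := QD.coeq q hq
  obtain ⟨hcl⟩ := hl W
  exact ⟨Cofork.IsColimit.desc hcl t (H Z u v h), Cofork.IsColimit.π_desc hcl⟩

lemma descend_r {X Y T : C} {q : X ⟶ Y} (hq : QD.Q q) (W : C) (t : X ⊗ W ⟶ T)
    (H : ∀ (E : C) (u v : E ⟶ X), u ≫ q = v ≫ q → (u ▷ W) ≫ t = (v ▷ W) ≫ t) :
    ∃ s : Y ⊗ W ⟶ T, (q ▷ W) ≫ s = t := by
  obtain ⟨Z, u, v, h, ⟨-, -, hr⟩⟩ := QD.coeq q hq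
  obtain ⟨hcr⟩ := hr W
  exact ⟨Cofork.IsColimit.desc hcr t (H Z u v h), Cofork.IsColimit.π_desc hcr⟩

lemma nd_right {A : C} {m : A ⊗ A ⟶ A} (h : NonDeg A m) {W : C} {t t' : W ⟶ A}
    (H : (t ▷ A) ≫ m = (t' ▷ A) ≫ m) : t = t' := by
  have key : ∀ s : W ⟶ A, ((s ≫ (λ_ A).inv) ▷ A) ≫ (α_ (𝟙_ C) A A).hom ≫ (𝟙_ C ◁ m)
      = (s ▷ A) ≫ m ≫ (λ_ A).inv := by
    intro s
    rw [MonoidalCategory.comp_whiskerRight, assoc]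
    congr 1
    monoidal
  have := h.1 W (𝟙_ C) (a₁ := t ≫ (λ_ A).inv) (a₂ := t' ≫ (λ_ A).inv) (by
    dsimp only
    rw [key, key, reassoc_of% H])
  simpa [cancel_mono] using this

lemma nd_left {A : C} {m : A ⊗ A ⟶ A} (h : NonDeg A m) {W : C} {t t' : W ⟶ A}
    (H : (A ◁ t) ≫ m = (A ◁ t') ≫ m) : t = t' := by
  have key : ∀ s : W ⟶ A, (A ◁ (s ≫ (ρ_ A).inv)) ≫ (α_ A A (𝟙_ C)).inv ≫ (m ▷ 𝟙_ C)
      = (A ◁ s) ≫ m ≫ (ρ_ A).inv := by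
    intro s
    rw [MonoidalCategory.whiskerLeft_comp, assoc]
    congr 1
    monoidal
  have := h.2 W (𝟙_ C) (a₁ := t ≫ (ρ_ A).inv) (a₂ := t' ≫ (ρ_ A).inv) (by
    dsimp only
    rw [key, key, reassoc_of% H])
  simpa [cancel_mono] using this

/-- `f₁` is a right module map: `f₁(x⊗y)·y' = f₁(x⊗(y·y'))`. -/
lemma mod₁ {X Y : MObj QD} (f : MHom X Y) :
    (f.f₁ ▷ Y.A) ≫ Y.m = (α_ X.A Y.A Y.A).hom ≫ (X.A ◁ Y.m) ≫ f.f₁ := by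
  have hA : (Y.m ▷ Y.A) ≫ Y.m = (α_ Y.A Y.A Y.A).hom ≫ (Y.A ◁ Y.m) ≫ Y.m := Y.assoc
  have hA' : (Y.A ◁ Y.m) ≫ Y.m = (α_ Y.A Y.A Y.A).inv ≫ (Y.m ▷ Y.A) ≫ Y.m := by
    rw [hA, Iso.inv_hom_id_assoc]
  have hC : (f.f₂ ▷ Y.A) ≫ Y.m = (α_ Y.A X.A Y.A).hom ≫ (Y.A ◁ f.f₁) ≫ Y.m := f.compat
  have hC' : (Y.A ◁ f.f₁) ≫ Y.m = (α_ Y.A X.A Y.A).inv ≫ (f.f₂ ▷ Y.A) ≫ Y.m := by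
    rw [hC, Iso.inv_hom_id_assoc]
  apply nd_left Y.nondeg
  calc (Y.A ◁ ((f.f₁ ▷ Y.A) ≫ Y.m)) ≫ Y.m
      = (Y.A ◁ (f.f₁ ▷ Y.A)) ≫ ((Y.A ◁ Y.m) ≫ Y.m) := by
        rw [MonoidalCategory.whiskerLeft_comp, assoc]
    _ = (Y.A ◁ (f.f₁ ▷ Y.A)) ≫ ((α_ Y.A Y.A Y.A).inv ≫ (Y.m ▷ Y.A) ≫ Y.m) := by rw [hA']
    _ = (α_ Y.A (X.A ⊗ Y.A) Y.A).inv ≫ (((Y.A ◁ f.f₁) ≫ Y.m) ▷ Y.A) ≫ Y.m := by monoidal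
    _ = (α_ Y.A (X.A ⊗ Y.A) Y.A).inv ≫
          (((α_ Y.A X.A Y.A).inv ≫ (f.f₂ ▷ Y.A) ≫ Y.m) ▷ Y.A) ≫ Y.m := by rw [hC']
    _ = (α_ Y.A (X.A ⊗ Y.A) Y.A).inv ≫ ((α_ Y.A X.A Y.A).inv ▷ Y.A) ≫
          ((f.f₂ ▷ Y.A) ▷ Y.A) ≫ ((Y.m ▷ Y.A) ≫ Y.m) := by monoidal
    _ = (α_ Y.A (X.A ⊗ Y.A) Y.A).inv ≫ ((α_ Y.A X.A Y.A).inv ▷ Y.A) ≫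
          ((f.f₂ ▷ Y.A) ▷ Y.A) ≫ ((α_ Y.A Y.A Y.A).hom ≫ (Y.A ◁ Y.m) ≫ Y.m) := by rw [hA]
    _ = ((α_ Y.A (X.A ⊗ Y.A) Y.A).inv ≫ ((α_ Y.A X.A Y.A).inv ▷ Y.A) ≫
          (α_ (Y.A ⊗ X.A) Y.A Y.A).hom) ≫ ((f.f₂ ▷ (Y.A ⊗ Y.A)) ≫ (Y.A ◁ Y.m)) ≫
          Y.m := by monoidal
    _ = ((α_ Y.A (X.A ⊗ Y.A) Y.A).inv ≫ ((α_ Y.A X.A Y.A).inv ▷ Y.A) ≫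
          (α_ (Y.A ⊗ X.A) Y.A Y.A).hom) ≫ (((Y.A ⊗ X.A) ◁ Y.m) ≫ (f.f₂ ▷ Y.A)) ≫
          Y.m := by rw [← whisker_exchange]
    _ = ((α_ Y.A (X.A ⊗ Y.A) Y.A).inv ≫ ((α_ Y.A X.A Y.A).inv ▷ Y.A) ≫
          (α_ (Y.A ⊗ X.A) Y.A Y.A).hom) ≫ ((Y.A ⊗ X.A) ◁ Y.m) ≫
          ((f.f₂ ▷ Y.A) ≫ Y.m) := by simp only [assoc]
    _ = ((α_ Y.A (X.A ⊗ Y.A) Y.A).inv ≫ ((α_ Y.A X.A Y.A).inv ▷ Y.A) ≫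
          (α_ (Y.A ⊗ X.A) Y.A Y.A).hom) ≫ ((Y.A ⊗ X.A) ◁ Y.m) ≫
          ((α_ Y.A X.A Y.A).hom ≫ (Y.A ◁ f.f₁) ≫ Y.m) := by rw [hC]
    _ = (Y.A ◁ ((α_ X.A Y.A Y.A).hom ≫ (X.A ◁ Y.m) ≫ f.f₁)) ≫ Y.m := by monoidal

/-- `f₂` is a left module map: `y·f₂(y'⊗x) = f₂((y·y')⊗x)`. -/
lemma mod₂ {X Y : MObj QD} (f : MHom X Y) :
    (Y.A ◁ f.f₂) ≫ Y.m = (α_ Y.A Y.A X.A).inv ≫ (Y.m ▷ X.A) ≫ f.f₂ := by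
  have hA : (Y.m ▷ Y.A) ≫ Y.m = (α_ Y.A Y.A Y.A).hom ≫ (Y.A ◁ Y.m) ≫ Y.m := Y.assoc
  have hA' : (Y.A ◁ Y.m) ≫ Y.m = (α_ Y.A Y.A Y.A).inv ≫ (Y.m ▷ Y.A) ≫ Y.m := by
    rw [hA, Iso.inv_hom_id_assoc]
  have hC : (f.f₂ ▷ Y.A) ≫ Y.m = (α_ Y.A X.A Y.A).hom ≫ (Y.A ◁ f.f₁) ≫ Y.m := f.compat
  apply nd_right Y.nondeg
  calc (((Y.A ◁ f.f₂) ≫ Y.m) ▷ Y.A) ≫ Y.m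
      = ((Y.A ◁ f.f₂) ▷ Y.A) ≫ ((Y.m ▷ Y.A) ≫ Y.m) := by
        rw [MonoidalCategory.comp_whiskerRight, assoc]
    _ = ((Y.A ◁ f.f₂) ▷ Y.A) ≫ ((α_ Y.A Y.A Y.A).hom ≫ (Y.A ◁ Y.m) ≫ Y.m) := by rw [hA]
    _ = (α_ Y.A (Y.A ⊗ X.A) Y.A).hom ≫ (Y.A ◁ ((f.f₂ ▷ Y.A) ≫ Y.m)) ≫ Y.m := by monoidal
    _ = (α_ Y.A (Y.A ⊗ X.A) Y.A).hom ≫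
          (Y.A ◁ ((α_ Y.A X.A Y.A).hom ≫ (Y.A ◁ f.f₁) ≫ Y.m)) ≫ Y.m := by rw [hC]
    _ = (α_ Y.A (Y.A ⊗ X.A) Y.A).hom ≫ (Y.A ◁ (α_ Y.A X.A Y.A).hom) ≫
          (Y.A ◁ (Y.A ◁ f.f₁)) ≫ ((Y.A ◁ Y.m) ≫ Y.m) := by monoidal
    _ = (α_ Y.A (Y.A ⊗ X.A) Y.A).hom ≫ (Y.A ◁ (α_ Y.A X.A Y.A).hom) ≫
          (Y.A ◁ (Y.A ◁ f.f₁)) ≫ ((α_ Y.A Y.A Y.A).inv ≫ (Y.m ▷ Y.A) ≫ Y.m) := by rw [hA']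
    _ = ((α_ Y.A (Y.A ⊗ X.A) Y.A).hom ≫ (Y.A ◁ (α_ Y.A X.A Y.A).hom) ≫
          (α_ Y.A Y.A (X.A ⊗ Y.A)).inv) ≫ (((Y.A ⊗ Y.A) ◁ f.f₁) ≫ (Y.m ▷ Y.A)) ≫
          Y.m := by monoidal
    _ = ((α_ Y.A (Y.A ⊗ X.A) Y.A).hom ≫ (Y.A ◁ (α_ Y.A X.A Y.A).hom) ≫
          (α_ Y.A Y.A (X.A ⊗ Y.A)).inv) ≫ ((Y.m ▷ (X.A ⊗ Y.A)) ≫ (Y.A ◁ f.f₁)) ≫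
          Y.m := by rw [whisker_exchange]
    _ = ((α_ Y.A Y.A X.A).inv ▷ Y.A) ≫ ((Y.m ▷ X.A) ▷ Y.A) ≫
          ((α_ Y.A X.A Y.A).hom ≫ (Y.A ◁ f.f₁) ≫ Y.m) := by monoidal
    _ = ((α_ Y.A Y.A X.A).inv ▷ Y.A) ≫ ((Y.m ▷ X.A) ▷ Y.A) ≫ ((f.f₂ ▷ Y.A) ≫ Y.m) := by
        rw [hC]
    _ = (((α_ Y.A Y.A X.A).inv ≫ (Y.m ▷ X.A) ≫ f.f₂) ▷ Y.A) ≫ Y.m := by monoidal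

section Comp
variable {X Y Z : MObj QD} (f : MHom X Y) (g : MHom Y Z)

/-- `g₁(f₂(y⊗x)⊗g₁(y'⊗z)) = g₁(y⊗g₁(f₁(x⊗y')⊗z))` (read right-to-left). -/
lemma mix :
    (Y.A ◁ ((α_ X.A Y.A Z.A).inv ≫ (f.f₁ ▷ Z.A) ≫ g.f₁)) ≫ g.f₁
      = (α_ Y.A X.A (Y.A ⊗ Z.A)).inv ≫ ((Y.A ⊗ X.A) ◁ g.f₁) ≫ (f.f₂ ▷ Z.A) ≫ g.f₁ := by
  have gM : (Y.m ▷ Z.A) ≫ g.f₁ = (α_ Y.A Y.A Z.A).hom ≫ (Y.A ◁ g.f₁) ≫ g.f₁ := g.mult₁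
  have gM' : (Y.A ◁ g.f₁) ≫ g.f₁ = (α_ Y.A Y.A Z.A).inv ≫ (Y.m ▷ Z.A) ≫ g.f₁ := by
    rw [gM, Iso.inv_hom_id_assoc]
  have fC : (f.f₂ ▷ Y.A) ≫ Y.m = (α_ Y.A X.A Y.A).hom ≫ (Y.A ◁ f.f₁) ≫ Y.m := f.compat
  have fC' : (Y.A ◁ f.f₁) ≫ Y.m = (α_ Y.A X.A Y.A).inv ≫ (f.f₂ ▷ Y.A) ≫ Y.m := by
    rw [fC, Iso.inv_hom_id_assoc]
  calc (Y.A ◁ ((α_ X.A Y.A Z.A).inv ≫ (f.f₁ ▷ Z.A) ≫ g.f₁)) ≫ g.f₁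
      = (Y.A ◁ ((α_ X.A Y.A Z.A).inv ≫ (f.f₁ ▷ Z.A))) ≫ ((Y.A ◁ g.f₁) ≫ g.f₁) := by
        simp only [MonoidalCategory.whiskerLeft_comp, assoc]
    _ = (Y.A ◁ ((α_ X.A Y.A Z.A).inv ≫ (f.f₁ ▷ Z.A))) ≫
          ((α_ Y.A Y.A Z.A).inv ≫ (Y.m ▷ Z.A) ≫ g.f₁) := by rw [gM']
    _ = ((Y.A ◁ (α_ X.A Y.A Z.A).inv) ≫ (α_ Y.A (X.A ⊗ Y.A) Z.A).inv) ≫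
          (((Y.A ◁ f.f₁) ≫ Y.m) ▷ Z.A) ≫ g.f₁ := by monoidal
    _ = ((Y.A ◁ (α_ X.A Y.A Z.A).inv) ≫ (α_ Y.A (X.A ⊗ Y.A) Z.A).inv) ≫
          (((α_ Y.A X.A Y.A).inv ≫ (f.f₂ ▷ Y.A) ≫ Y.m) ▷ Z.A) ≫ g.f₁ := by rw [fC']
    _ = ((Y.A ◁ (α_ X.A Y.A Z.A).inv) ≫ (α_ Y.A (X.A ⊗ Y.A) Z.A).inv ≫
          ((α_ Y.A X.A Y.A).inv ▷ Z.A)) ≫ ((f.f₂ ▷ Y.A) ▷ Z.A) ≫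
          ((Y.m ▷ Z.A) ≫ g.f₁) := by monoidal
    _ = ((Y.A ◁ (α_ X.A Y.A Z.A).inv) ≫ (α_ Y.A (X.A ⊗ Y.A) Z.A).inv ≫
          ((α_ Y.A X.A Y.A).inv ▷ Z.A)) ≫ ((f.f₂ ▷ Y.A) ▷ Z.A) ≫
          ((α_ Y.A Y.A Z.A).hom ≫ (Y.A ◁ g.f₁) ≫ g.f₁) := by rw [gM]
    _ = ((Y.A ◁ (α_ X.A Y.A Z.A).inv) ≫ (α_ Y.A (X.A ⊗ Y.A) Z.A).inv ≫
          ((α_ Y.A X.A Y.A).inv ▷ Z.A) ≫ (α_ (Y.A ⊗ X.A) Y.A Z.A).hom) ≫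
          ((f.f₂ ▷ (Y.A ⊗ Z.A)) ≫ (Y.A ◁ g.f₁)) ≫ g.f₁ := by monoidal
    _ = ((Y.A ◁ (α_ X.A Y.A Z.A).inv) ≫ (α_ Y.A (X.A ⊗ Y.A) Z.A).inv ≫
          ((α_ Y.A X.A Y.A).inv ▷ Z.A) ≫ (α_ (Y.A ⊗ X.A) Y.A Z.A).hom) ≫
          (((Y.A ⊗ X.A) ◁ g.f₁) ≫ (f.f₂ ▷ Z.A)) ≫ g.f₁ := by rw [← whisker_exchange]
    _ = (α_ Y.A X.A (Y.A ⊗ Z.A)).inv ≫ ((Y.A ⊗ X.A) ◁ g.f₁) ≫ (f.f₂ ▷ Z.A) ≫ g.f₁ := by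
        monoidal

/-- The master identity: both coequalizing conditions and compatibility reduce to it. -/
lemma master :
    (g.f₂ ▷ (X.A ⊗ (Y.A ⊗ Z.A))) ≫
        (Z.A ◁ ((α_ X.A Y.A Z.A).inv ≫ (f.f₁ ▷ Z.A) ≫ g.f₁)) ≫ Z.m
      = (α_ (Z.A ⊗ Y.A) X.A (Y.A ⊗ Z.A)).inv ≫
          (((α_ Z.A Y.A X.A).hom ≫ (Z.A ◁ f.f₂) ≫ g.f₂) ⊗ₘ g.f₁) ≫ Z.m := by
  have gC : (g.f₂ ▷ Z.A) ≫ Z.m = (α_ Z.A Y.A Z.A).hom ≫ (Z.A ◁ g.f₁) ≫ Z.m := g.compat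
  have gC' : (Z.A ◁ g.f₁) ≫ Z.m = (α_ Z.A Y.A Z.A).inv ≫ (g.f₂ ▷ Z.A) ≫ Z.m := by
    rw [gC, Iso.inv_hom_id_assoc]
  calc (g.f₂ ▷ (X.A ⊗ (Y.A ⊗ Z.A))) ≫
        (Z.A ◁ ((α_ X.A Y.A Z.A).inv ≫ (f.f₁ ▷ Z.A) ≫ g.f₁)) ≫ Z.m
      = ((Z.A ⊗ Y.A) ◁ ((α_ X.A Y.A Z.A).inv ≫ (f.f₁ ▷ Z.A) ≫ g.f₁)) ≫
          ((g.f₂ ▷ Z.A) ≫ Z.m) := by rw [← whisker_exchange_assoc]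
    _ = ((Z.A ⊗ Y.A) ◁ ((α_ X.A Y.A Z.A).inv ≫ (f.f₁ ▷ Z.A) ≫ g.f₁)) ≫
          ((α_ Z.A Y.A Z.A).hom ≫ (Z.A ◁ g.f₁) ≫ Z.m) := by rw [gC]
    _ = (α_ Z.A Y.A (X.A ⊗ (Y.A ⊗ Z.A))).hom ≫
          (Z.A ◁ ((Y.A ◁ ((α_ X.A Y.A Z.A).inv ≫ (f.f₁ ▷ Z.A) ≫ g.f₁)) ≫ g.f₁)) ≫
          Z.m := by monoidal
    _ = (α_ Z.A Y.A (X.A ⊗ (Y.A ⊗ Z.A))).hom ≫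
          (Z.A ◁ ((α_ Y.A X.A (Y.A ⊗ Z.A)).inv ≫ ((Y.A ⊗ X.A) ◁ g.f₁) ≫
            (f.f₂ ▷ Z.A) ≫ g.f₁)) ≫ Z.m := by rw [mix f g]
    _ = (α_ Z.A Y.A (X.A ⊗ (Y.A ⊗ Z.A))).hom ≫
          (Z.A ◁ ((α_ Y.A X.A (Y.A ⊗ Z.A)).inv ≫ ((Y.A ⊗ X.A) ◁ g.f₁) ≫
            (f.f₂ ▷ Z.A))) ≫ ((Z.A ◁ g.f₁) ≫ Z.m) := by
        simp only [MonoidalCategory.whiskerLeft_comp, assoc]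
    _ = (α_ Z.A Y.A (X.A ⊗ (Y.A ⊗ Z.A))).hom ≫
          (Z.A ◁ ((α_ Y.A X.A (Y.A ⊗ Z.A)).inv ≫ ((Y.A ⊗ X.A) ◁ g.f₁) ≫
            (f.f₂ ▷ Z.A))) ≫ ((α_ Z.A Y.A Z.A).inv ≫ (g.f₂ ▷ Z.A) ≫ Z.m) := by rw [gC']
    _ = ((α_ Z.A Y.A (X.A ⊗ (Y.A ⊗ Z.A))).hom ≫ (Z.A ◁ (α_ Y.A X.A (Y.A ⊗ Z.A)).inv) ≫
          (α_ Z.A (Y.A ⊗ X.A) (Y.A ⊗ Z.A)).inv) ≫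
          (((Z.A ⊗ (Y.A ⊗ X.A)) ◁ g.f₁) ≫ ((Z.A ◁ f.f₂) ▷ Z.A)) ≫
          ((g.f₂ ▷ Z.A) ≫ Z.m) := by monoidal
    _ = ((α_ Z.A Y.A (X.A ⊗ (Y.A ⊗ Z.A))).hom ≫ (Z.A ◁ (α_ Y.A X.A (Y.A ⊗ Z.A)).inv) ≫
          (α_ Z.A (Y.A ⊗ X.A) (Y.A ⊗ Z.A)).inv) ≫
          (((Z.A ◁ f.f₂) ▷ (Y.A ⊗ Z.A)) ≫ ((Z.A ⊗ Y.A) ◁ g.f₁)) ≫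
          ((g.f₂ ▷ Z.A) ≫ Z.m) := by rw [whisker_exchange]
    _ = ((α_ Z.A Y.A (X.A ⊗ (Y.A ⊗ Z.A))).hom ≫ (Z.A ◁ (α_ Y.A X.A (Y.A ⊗ Z.A)).inv) ≫
          (α_ Z.A (Y.A ⊗ X.A) (Y.A ⊗ Z.A)).inv) ≫ ((Z.A ◁ f.f₂) ▷ (Y.A ⊗ Z.A)) ≫
          (((Z.A ⊗ Y.A) ◁ g.f₁) ≫ (g.f₂ ▷ Z.A)) ≫ Z.m := by simp only [assoc]
    _ = ((α_ Z.A Y.A (X.A ⊗ (Y.A ⊗ Z.A))).hom ≫ (Z.A ◁ (α_ Y.A X.A (Y.A ⊗ Z.A)).inv) ≫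
          (α_ Z.A (Y.A ⊗ X.A) (Y.A ⊗ Z.A)).inv) ≫ ((Z.A ◁ f.f₂) ▷ (Y.A ⊗ Z.A)) ≫
          ((g.f₂ ▷ (Y.A ⊗ Z.A)) ≫ (Z.A ◁ g.f₁)) ≫ Z.m := by rw [whisker_exchange]
    _ = (α_ (Z.A ⊗ Y.A) X.A (Y.A ⊗ Z.A)).inv ≫
          (((α_ Z.A Y.A X.A).hom ≫ (Z.A ◁ f.f₂) ≫ g.f₂) ⊗ₘ g.f₁) ≫ Z.m := by
        simp only [MonoidalCategory.tensorHom_def, MonoidalCategory.comp_whiskerRight, assoc]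
        monoidal

lemma master' :
    ((((α_ Z.A Y.A X.A).hom ≫ (Z.A ◁ f.f₂) ≫ g.f₂)) ⊗ₘ g.f₁) ≫ Z.m
      = (α_ (Z.A ⊗ Y.A) X.A (Y.A ⊗ Z.A)).hom ≫ (g.f₂ ▷ (X.A ⊗ (Y.A ⊗ Z.A))) ≫
          (Z.A ◁ ((α_ X.A Y.A Z.A).inv ≫ (f.f₁ ▷ Z.A) ≫ g.f₁)) ≫ Z.m := by
  rw [master f g, Iso.hom_inv_id_assoc]

lemma coeq₁ (E : C) (u v : E ⟶ Y.A ⊗ Z.A) (huv : u ≫ g.f₁ = v ≫ g.f₁) :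
    (X.A ◁ u) ≫ ((α_ X.A Y.A Z.A).inv ≫ (f.f₁ ▷ Z.A) ≫ g.f₁)
      = (X.A ◁ v) ≫ ((α_ X.A Y.A Z.A).inv ≫ (f.f₁ ▷ Z.A) ≫ g.f₁) := by
  apply nd_left Z.nondeg
  have : Epi (g.f₂ ▷ (X.A ⊗ E)) := qEpi (qWR g.dense₂ _)
  rw [← cancel_epi (g.f₂ ▷ (X.A ⊗ E))]
  have key : ∀ w : E ⟶ Y.A ⊗ Z.A,
      (g.f₂ ▷ (X.A ⊗ E)) ≫
        (Z.A ◁ ((X.A ◁ w) ≫ ((α_ X.A Y.A Z.A).inv ≫ (f.f₁ ▷ Z.A) ≫ g.f₁))) ≫ Z.m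
      = (α_ (Z.A ⊗ Y.A) X.A E).inv ≫
          (((α_ Z.A Y.A X.A).hom ≫ (Z.A ◁ f.f₂) ≫ g.f₂) ⊗ₘ (w ≫ g.f₁)) ≫ Z.m := by
    intro w
    calc (g.f₂ ▷ (X.A ⊗ E)) ≫
          (Z.A ◁ ((X.A ◁ w) ≫ ((α_ X.A Y.A Z.A).inv ≫ (f.f₁ ▷ Z.A) ≫ g.f₁))) ≫ Z.m
        = ((Z.A ⊗ Y.A) ◁ (X.A ◁ w)) ≫ (g.f₂ ▷ (X.A ⊗ (Y.A ⊗ Z.A))) ≫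
            (Z.A ◁ ((α_ X.A Y.A Z.A).inv ≫ (f.f₁ ▷ Z.A) ≫ g.f₁)) ≫ Z.m := by
          simp only [MonoidalCategory.whiskerLeft_comp, assoc, ← whisker_exchange_assoc]
      _ = ((Z.A ⊗ Y.A) ◁ (X.A ◁ w)) ≫ (α_ (Z.A ⊗ Y.A) X.A (Y.A ⊗ Z.A)).inv ≫
            (((α_ Z.A Y.A X.A).hom ≫ (Z.A ◁ f.f₂) ≫ g.f₂) ⊗ₘ g.f₁) ≫ Z.m := by
          rw [master f g]
      _ = (α_ (Z.A ⊗ Y.A) X.A E).inv ≫ ((((Z.A ⊗ Y.A) ⊗ X.A) ◁ w) ≫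
            (((α_ Z.A Y.A X.A).hom ≫ (Z.A ◁ f.f₂) ≫ g.f₂) ⊗ₘ g.f₁)) ≫ Z.m := by
          rw [associator_inv_naturality_right_assoc]
          simp only [assoc]
      _ = (α_ (Z.A ⊗ Y.A) X.A E).inv ≫
            (((α_ Z.A Y.A X.A).hom ≫ (Z.A ◁ f.f₂) ≫ g.f₂) ⊗ₘ (w ≫ g.f₁)) ≫ Z.m := by
          rw [← MonoidalCategory.id_tensorHom, MonoidalCategory.tensorHom_comp_tensorHom, id_comp]
  rw [key u, key v, huv]

lemma coeq₂ (E : C) (u v : E ⟶ Z.A ⊗ Y.A) (huv : u ≫ g.f₂ = v ≫ g.f₂) :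
    (u ▷ X.A) ≫ ((α_ Z.A Y.A X.A).hom ≫ (Z.A ◁ f.f₂) ≫ g.f₂)
      = (v ▷ X.A) ≫ ((α_ Z.A Y.A X.A).hom ≫ (Z.A ◁ f.f₂) ≫ g.f₂) := by
  apply nd_right Z.nondeg
  have : Epi ((E ⊗ X.A) ◁ g.f₁) := qEpi (qWL _ g.dense₁)
  rw [← cancel_epi ((E ⊗ X.A) ◁ g.f₁)]
  have key : ∀ w : E ⟶ Z.A ⊗ Y.A,
      ((E ⊗ X.A) ◁ g.f₁) ≫
        (((w ▷ X.A) ≫ ((α_ Z.A Y.A X.A).hom ≫ (Z.A ◁ f.f₂) ≫ g.f₂)) ▷ Z.A) ≫ Z.m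
      = (α_ E X.A (Y.A ⊗ Z.A)).hom ≫ ((w ≫ g.f₂) ▷ (X.A ⊗ (Y.A ⊗ Z.A))) ≫
          (Z.A ◁ ((α_ X.A Y.A Z.A).inv ≫ (f.f₁ ▷ Z.A) ≫ g.f₁)) ≫ Z.m := by
    intro w
    calc ((E ⊗ X.A) ◁ g.f₁) ≫
          (((w ▷ X.A) ≫ ((α_ Z.A Y.A X.A).hom ≫ (Z.A ◁ f.f₂) ≫ g.f₂)) ▷ Z.A) ≫ Z.m
        = ((E ⊗ X.A) ◁ g.f₁) ≫ ((w ▷ X.A) ▷ Z.A) ≫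
            ((((α_ Z.A Y.A X.A).hom ≫ (Z.A ◁ f.f₂) ≫ g.f₂)) ▷ Z.A) ≫ Z.m := by
          simp only [MonoidalCategory.comp_whiskerRight, assoc]
      _ = ((w ▷ X.A) ▷ (Y.A ⊗ Z.A)) ≫ (((Z.A ⊗ Y.A) ⊗ X.A) ◁ g.f₁) ≫
            ((((α_ Z.A Y.A X.A).hom ≫ (Z.A ◁ f.f₂) ≫ g.f₂)) ▷ Z.A) ≫ Z.m := by
          rw [← whisker_exchange_assoc]
      _ = ((w ▷ X.A) ▷ (Y.A ⊗ Z.A)) ≫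
            ((((α_ Z.A Y.A X.A).hom ≫ (Z.A ◁ f.f₂) ≫ g.f₂)) ▷ (Y.A ⊗ Z.A)) ≫
            (Z.A ◁ g.f₁) ≫ Z.m := by rw [whisker_exchange_assoc]
      _ = ((w ▷ X.A) ▷ (Y.A ⊗ Z.A)) ≫
            ((((α_ Z.A Y.A X.A).hom ≫ (Z.A ◁ f.f₂) ≫ g.f₂)) ⊗ₘ g.f₁) ≫ Z.m := by
          rw [MonoidalCategory.tensorHom_def]
          simp only [assoc]
      _ = ((w ▷ X.A) ▷ (Y.A ⊗ Z.A)) ≫ (α_ (Z.A ⊗ Y.A) X.A (Y.A ⊗ Z.A)).hom ≫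
            (g.f₂ ▷ (X.A ⊗ (Y.A ⊗ Z.A))) ≫
            (Z.A ◁ ((α_ X.A Y.A Z.A).inv ≫ (f.f₁ ▷ Z.A) ≫ g.f₁)) ≫ Z.m := by
          rw [master' f g]
      _ = (α_ E X.A (Y.A ⊗ Z.A)).hom ≫ (w ▷ (X.A ⊗ (Y.A ⊗ Z.A))) ≫
            (g.f₂ ▷ (X.A ⊗ (Y.A ⊗ Z.A))) ≫
            (Z.A ◁ ((α_ X.A Y.A Z.A).inv ≫ (f.f₁ ▷ Z.A) ≫ g.f₁)) ≫ Z.m := by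
          rw [associator_naturality_left_assoc]
      _ = (α_ E X.A (Y.A ⊗ Z.A)).hom ≫ ((w ≫ g.f₂) ▷ (X.A ⊗ (Y.A ⊗ Z.A))) ≫
            (Z.A ◁ ((α_ X.A Y.A Z.A).inv ≫ (f.f₁ ▷ Z.A) ≫ g.f₁)) ≫ Z.m := by
          rw [← comp_whiskerRight_assoc]
  rw [key u, key v, huv]

lemma cHom_exists :
    ∃ h : MHom X Z,
      ((X.A ◁ g.f₁) ≫ h.f₁ = (α_ X.A Y.A Z.A).inv ≫ (f.f₁ ▷ Z.A) ≫ g.f₁) ∧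
      ((g.f₂ ▷ X.A) ≫ h.f₂ = (α_ Z.A Y.A X.A).hom ≫ (Z.A ◁ f.f₂) ≫ g.f₂) := by
  obtain ⟨h₁, hs₁⟩ := descend_l g.dense₁ X.A _ (coeq₁ f g)
  obtain ⟨h₂, hs₂⟩ := descend_r g.dense₂ X.A _ (coeq₂ f g)
  have fM : (X.m ▷ Y.A) ≫ f.f₁ = (α_ X.A X.A Y.A).hom ≫ (X.A ◁ f.f₁) ≫ f.f₁ := f.mult₁
  have fM₂ : (α_ Y.A X.A X.A).hom ≫ (Y.A ◁ X.m) ≫ f.f₂ = (f.f₂ ▷ X.A) ≫ f.f₂ := f.mult₂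
  refine ⟨⟨h₁, h₂, ?_, ?_, ?_, ?_, ?_⟩, hs₁, hs₂⟩
  · -- compat
    have : Epi ((g.f₂ ▷ X.A) ⊗ₘ g.f₁) := qEpi (QD.tensor_mem _ _ (qWR g.dense₂ X.A) g.dense₁)
    show (h₂ ▷ Z.A) ≫ Z.m = (α_ Z.A X.A Z.A).hom ≫ (Z.A ◁ h₁) ≫ Z.m
    rw [← cancel_epi ((g.f₂ ▷ X.A) ⊗ₘ g.f₁)]
    have eL : ((g.f₂ ▷ X.A) ⊗ₘ g.f₁) ≫ ((h₂ ▷ Z.A) ≫ Z.m)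
        = (((α_ Z.A Y.A X.A).hom ≫ (Z.A ◁ f.f₂) ≫ g.f₂) ⊗ₘ g.f₁) ≫ Z.m := by
      calc ((g.f₂ ▷ X.A) ⊗ₘ g.f₁) ≫ ((h₂ ▷ Z.A) ≫ Z.m)
          = ((g.f₂ ▷ X.A) ▷ (Y.A ⊗ Z.A)) ≫ ((Z.A ⊗ X.A) ◁ g.f₁) ≫ (h₂ ▷ Z.A) ≫ Z.m := by
            rw [MonoidalCategory.tensorHom_def]; simp only [assoc]
        _ = ((g.f₂ ▷ X.A) ▷ (Y.A ⊗ Z.A)) ≫ (h₂ ▷ (Y.A ⊗ Z.A)) ≫ (Z.A ◁ g.f₁) ≫ Z.m := by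
            rw [whisker_exchange_assoc]
        _ = (((g.f₂ ▷ X.A) ≫ h₂) ▷ (Y.A ⊗ Z.A)) ≫ (Z.A ◁ g.f₁) ≫ Z.m := by
            rw [← comp_whiskerRight_assoc]
        _ = (((α_ Z.A Y.A X.A).hom ≫ (Z.A ◁ f.f₂) ≫ g.f₂) ▷ (Y.A ⊗ Z.A)) ≫
              (Z.A ◁ g.f₁) ≫ Z.m := by rw [hs₂]
        _ = (((α_ Z.A Y.A X.A).hom ≫ (Z.A ◁ f.f₂) ≫ g.f₂) ⊗ₘ g.f₁) ≫ Z.m := by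
            rw [MonoidalCategory.tensorHom_def]; simp only [assoc]
    have eR : ((g.f₂ ▷ X.A) ⊗ₘ g.f₁) ≫ ((α_ Z.A X.A Z.A).hom ≫ (Z.A ◁ h₁) ≫ Z.m)
        = (((α_ Z.A Y.A X.A).hom ≫ (Z.A ◁ f.f₂) ≫ g.f₂) ⊗ₘ g.f₁) ≫ Z.m := by
      calc ((g.f₂ ▷ X.A) ⊗ₘ g.f₁) ≫ ((α_ Z.A X.A Z.A).hom ≫ (Z.A ◁ h₁) ≫ Z.m)
          = ((g.f₂ ▷ X.A) ▷ (Y.A ⊗ Z.A)) ≫ ((Z.A ⊗ X.A) ◁ g.f₁) ≫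
              (α_ Z.A X.A Z.A).hom ≫ (Z.A ◁ h₁) ≫ Z.m := by
            rw [MonoidalCategory.tensorHom_def]; simp only [assoc]
        _ = ((g.f₂ ▷ X.A) ▷ (Y.A ⊗ Z.A)) ≫ (α_ Z.A X.A (Y.A ⊗ Z.A)).hom ≫
              (Z.A ◁ (X.A ◁ g.f₁)) ≫ (Z.A ◁ h₁) ≫ Z.m := by
            rw [associator_naturality_right_assoc]
        _ = ((g.f₂ ▷ X.A) ▷ (Y.A ⊗ Z.A)) ≫ (α_ Z.A X.A (Y.A ⊗ Z.A)).hom ≫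
              (Z.A ◁ ((X.A ◁ g.f₁) ≫ h₁)) ≫ Z.m := by
            rw [← MonoidalCategory.whiskerLeft_comp_assoc]
        _ = ((g.f₂ ▷ X.A) ▷ (Y.A ⊗ Z.A)) ≫ (α_ Z.A X.A (Y.A ⊗ Z.A)).hom ≫
              (Z.A ◁ ((α_ X.A Y.A Z.A).inv ≫ (f.f₁ ▷ Z.A) ≫ g.f₁)) ≫ Z.m := by rw [hs₁]
        _ = (α_ (Z.A ⊗ Y.A) X.A (Y.A ⊗ Z.A)).hom ≫ (g.f₂ ▷ (X.A ⊗ (Y.A ⊗ Z.A))) ≫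
              (Z.A ◁ ((α_ X.A Y.A Z.A).inv ≫ (f.f₁ ▷ Z.A) ≫ g.f₁)) ≫ Z.m := by
            rw [associator_naturality_left_assoc]
        _ = (((α_ Z.A Y.A X.A).hom ≫ (Z.A ◁ f.f₂) ≫ g.f₂) ⊗ₘ g.f₁) ≫ Z.m :=
            (master' f g).symm
    exact eL.trans eR.symm
  · -- mult₁
    have : Epi ((X.A ⊗ X.A) ◁ g.f₁) := qEpi (qWL _ g.dense₁)
    show (X.m ▷ Z.A) ≫ h₁ = (α_ X.A X.A Z.A).hom ≫ (X.A ◁ h₁) ≫ h₁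
    rw [← cancel_epi ((X.A ⊗ X.A) ◁ g.f₁)]
    have eL : ((X.A ⊗ X.A) ◁ g.f₁) ≫ ((X.m ▷ Z.A) ≫ h₁)
        = (α_ (X.A ⊗ X.A) Y.A Z.A).inv ≫
            (((α_ X.A X.A Y.A).hom ≫ (X.A ◁ f.f₁) ≫ f.f₁) ▷ Z.A) ≫ g.f₁ := by
      calc ((X.A ⊗ X.A) ◁ g.f₁) ≫ ((X.m ▷ Z.A) ≫ h₁)
          = (X.m ▷ (Y.A ⊗ Z.A)) ≫ (X.A ◁ g.f₁) ≫ h₁ := by rw [whisker_exchange_assoc]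
        _ = (X.m ▷ (Y.A ⊗ Z.A)) ≫ ((α_ X.A Y.A Z.A).inv ≫ (f.f₁ ▷ Z.A) ≫ g.f₁) := by
            rw [hs₁]
        _ = (α_ (X.A ⊗ X.A) Y.A Z.A).inv ≫ ((X.m ▷ Y.A) ▷ Z.A) ≫ (f.f₁ ▷ Z.A) ≫ g.f₁ := by
            rw [associator_inv_naturality_left_assoc]
        _ = (α_ (X.A ⊗ X.A) Y.A Z.A).inv ≫ (((X.m ▷ Y.A) ≫ f.f₁) ▷ Z.A) ≫ g.f₁ := by
            rw [← comp_whiskerRight_assoc]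
        _ = (α_ (X.A ⊗ X.A) Y.A Z.A).inv ≫
              (((α_ X.A X.A Y.A).hom ≫ (X.A ◁ f.f₁) ≫ f.f₁) ▷ Z.A) ≫ g.f₁ := by rw [fM]
    have eR : ((X.A ⊗ X.A) ◁ g.f₁) ≫ ((α_ X.A X.A Z.A).hom ≫ (X.A ◁ h₁) ≫ h₁)
        = (α_ (X.A ⊗ X.A) Y.A Z.A).inv ≫
            (((α_ X.A X.A Y.A).hom ≫ (X.A ◁ f.f₁) ≫ f.f₁) ▷ Z.A) ≫ g.f₁ := by
      calc ((X.A ⊗ X.A) ◁ g.f₁) ≫ ((α_ X.A X.A Z.A).hom ≫ (X.A ◁ h₁) ≫ h₁)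
          = (α_ X.A X.A (Y.A ⊗ Z.A)).hom ≫ (X.A ◁ (X.A ◁ g.f₁)) ≫ (X.A ◁ h₁) ≫ h₁ := by
            rw [associator_naturality_right_assoc]
        _ = (α_ X.A X.A (Y.A ⊗ Z.A)).hom ≫ (X.A ◁ ((X.A ◁ g.f₁) ≫ h₁)) ≫ h₁ := by
            rw [← MonoidalCategory.whiskerLeft_comp_assoc]
        _ = (α_ X.A X.A (Y.A ⊗ Z.A)).hom ≫
              (X.A ◁ ((α_ X.A Y.A Z.A).inv ≫ (f.f₁ ▷ Z.A) ≫ g.f₁)) ≫ h₁ := by rw [hs₁]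
        _ = (α_ X.A X.A (Y.A ⊗ Z.A)).hom ≫
              (X.A ◁ ((α_ X.A Y.A Z.A).inv ≫ (f.f₁ ▷ Z.A))) ≫ ((X.A ◁ g.f₁) ≫ h₁) := by
            simp only [MonoidalCategory.whiskerLeft_comp, assoc]
        _ = (α_ X.A X.A (Y.A ⊗ Z.A)).hom ≫
              (X.A ◁ ((α_ X.A Y.A Z.A).inv ≫ (f.f₁ ▷ Z.A))) ≫
              ((α_ X.A Y.A Z.A).inv ≫ (f.f₁ ▷ Z.A) ≫ g.f₁) := by rw [hs₁]
        _ = (α_ (X.A ⊗ X.A) Y.A Z.A).inv ≫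
              (((α_ X.A X.A Y.A).hom ≫ (X.A ◁ f.f₁) ≫ f.f₁) ▷ Z.A) ≫ g.f₁ := by monoidal
    exact eL.trans eR.symm
  · -- mult₂
    have : Epi ((g.f₂ ▷ X.A) ▷ X.A) := qEpi (qWR (qWR g.dense₂ X.A) X.A)
    show (α_ Z.A X.A X.A).hom ≫ (Z.A ◁ X.m) ≫ h₂ = (h₂ ▷ X.A) ≫ h₂
    rw [← cancel_epi ((g.f₂ ▷ X.A) ▷ X.A)]
    have eL : ((g.f₂ ▷ X.A) ▷ X.A) ≫ ((α_ Z.A X.A X.A).hom ≫ (Z.A ◁ X.m) ≫ h₂)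
        = (α_ (Z.A ⊗ Y.A) X.A X.A).hom ≫ (α_ Z.A Y.A (X.A ⊗ X.A)).hom ≫
            (Z.A ◁ ((Y.A ◁ X.m) ≫ f.f₂)) ≫ g.f₂ := by
      calc ((g.f₂ ▷ X.A) ▷ X.A) ≫ ((α_ Z.A X.A X.A).hom ≫ (Z.A ◁ X.m) ≫ h₂)
          = (α_ (Z.A ⊗ Y.A) X.A X.A).hom ≫ (g.f₂ ▷ (X.A ⊗ X.A)) ≫ (Z.A ◁ X.m) ≫ h₂ := by
            rw [associator_naturality_left_assoc]
        _ = (α_ (Z.A ⊗ Y.A) X.A X.A).hom ≫ ((Z.A ⊗ Y.A) ◁ X.m) ≫ ((g.f₂ ▷ X.A) ≫ h₂) := by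
            rw [← whisker_exchange_assoc]
        _ = (α_ (Z.A ⊗ Y.A) X.A X.A).hom ≫ ((Z.A ⊗ Y.A) ◁ X.m) ≫
              ((α_ Z.A Y.A X.A).hom ≫ (Z.A ◁ f.f₂) ≫ g.f₂) := by rw [hs₂]
        _ = (α_ (Z.A ⊗ Y.A) X.A X.A).hom ≫ (α_ Z.A Y.A (X.A ⊗ X.A)).hom ≫
              (Z.A ◁ (Y.A ◁ X.m)) ≫ (Z.A ◁ f.f₂) ≫ g.f₂ := by
            rw [associator_naturality_right_assoc]
        _ = (α_ (Z.A ⊗ Y.A) X.A X.A).hom ≫ (α_ Z.A Y.A (X.A ⊗ X.A)).hom ≫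
              (Z.A ◁ ((Y.A ◁ X.m) ≫ f.f₂)) ≫ g.f₂ := by
            rw [← MonoidalCategory.whiskerLeft_comp_assoc]
    have eR : ((g.f₂ ▷ X.A) ▷ X.A) ≫ ((h₂ ▷ X.A) ≫ h₂)
        = (α_ (Z.A ⊗ Y.A) X.A X.A).hom ≫ (α_ Z.A Y.A (X.A ⊗ X.A)).hom ≫
            (Z.A ◁ ((Y.A ◁ X.m) ≫ f.f₂)) ≫ g.f₂ := by
      calc ((g.f₂ ▷ X.A) ▷ X.A) ≫ ((h₂ ▷ X.A) ≫ h₂)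
          = (((g.f₂ ▷ X.A) ≫ h₂) ▷ X.A) ≫ h₂ := by rw [← comp_whiskerRight_assoc]
        _ = (((α_ Z.A Y.A X.A).hom ≫ (Z.A ◁ f.f₂) ≫ g.f₂) ▷ X.A) ≫ h₂ := by rw [hs₂]
        _ = ((α_ Z.A Y.A X.A).hom ▷ X.A) ≫ ((Z.A ◁ f.f₂) ▷ X.A) ≫ ((g.f₂ ▷ X.A) ≫ h₂) := by
            simp only [MonoidalCategory.comp_whiskerRight, assoc]
        _ = ((α_ Z.A Y.A X.A).hom ▷ X.A) ≫ ((Z.A ◁ f.f₂) ▷ X.A) ≫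
              ((α_ Z.A Y.A X.A).hom ≫ (Z.A ◁ f.f₂) ≫ g.f₂) := by rw [hs₂]
        _ = ((α_ Z.A Y.A X.A).hom ▷ X.A) ≫ (α_ Z.A (Y.A ⊗ X.A) X.A).hom ≫
              (Z.A ◁ (f.f₂ ▷ X.A)) ≫ (Z.A ◁ f.f₂) ≫ g.f₂ := by
            rw [associator_naturality_middle_assoc]
        _ = ((α_ Z.A Y.A X.A).hom ▷ X.A) ≫ (α_ Z.A (Y.A ⊗ X.A) X.A).hom ≫
              (Z.A ◁ ((f.f₂ ▷ X.A) ≫ f.f₂)) ≫ g.f₂ := by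
            rw [← MonoidalCategory.whiskerLeft_comp_assoc]
        _ = ((α_ Z.A Y.A X.A).hom ▷ X.A) ≫ (α_ Z.A (Y.A ⊗ X.A) X.A).hom ≫
              (Z.A ◁ ((α_ Y.A X.A X.A).hom ≫ (Y.A ◁ X.m) ≫ f.f₂)) ≫ g.f₂ := by rw [← fM₂]
        _ = (α_ (Z.A ⊗ Y.A) X.A X.A).hom ≫ (α_ Z.A Y.A (X.A ⊗ X.A)).hom ≫
              (Z.A ◁ ((Y.A ◁ X.m) ≫ f.f₂)) ≫ g.f₂ := by monoidal
    exact eL.trans eR.symm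
  · -- dense₁
    exact QD.cancel _ _ (qWL X.A g.dense₁) (by
      rw [hs₁]
      exact QD.comp_mem _ _ (QD.iso_mem _ inferInstance)
        (QD.comp_mem _ _ (qWR f.dense₁ _) g.dense₁))
  · -- dense₂
    exact QD.cancel _ _ (qWR g.dense₂ X.A) (by
      rw [hs₂]
      exact QD.comp_mem _ _ (QD.iso_mem _ inferInstance)
        (QD.comp_mem _ _ (qWL _ f.dense₂) g.dense₂))

/-- The composition `f ∙ g` of `𝕄`-morphisms. -/
noncomputable def cHom : MHom X Z := (cHom_exists f g).choose

lemma cHom_spec₁ :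
    (X.A ◁ g.f₁) ≫ (cHom f g).f₁ = (α_ X.A Y.A Z.A).inv ≫ (f.f₁ ▷ Z.A) ≫ g.f₁ :=
  (cHom_exists f g).choose_spec.1

lemma cHom_spec₂ :
    (g.f₂ ▷ X.A) ≫ (cHom f g).f₂ = (α_ Z.A Y.A X.A).hom ≫ (Z.A ◁ f.f₂) ≫ g.f₂ :=
  (cHom_exists f g).choose_spec.2

end Comp

lemma cHom_id_left {X Y : MObj QD} (f : MHom X Y) : cHom (MObj.idM X) f = f := by
  haveI : Epi (X.A ◁ f.f₁) := qEpi (qWL _ f.dense₁)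
  haveI : Epi (f.f₂ ▷ X.A) := qEpi (qWR f.dense₂ _)
  have fM : (X.m ▷ Y.A) ≫ f.f₁ = (α_ X.A X.A Y.A).hom ≫ (X.A ◁ f.f₁) ≫ f.f₁ := f.mult₁
  have fM₂ : (α_ Y.A X.A X.A).hom ≫ (Y.A ◁ X.m) ≫ f.f₂ = (f.f₂ ▷ X.A) ≫ f.f₂ := f.mult₂
  have e1 : (X.A ◁ f.f₁) ≫ (cHom (MObj.idM X) f).f₁ = (X.A ◁ f.f₁) ≫ f.f₁ := by
    have s : (X.A ◁ f.f₁) ≫ (cHom (MObj.idM X) f).f₁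
        = (α_ X.A X.A Y.A).inv ≫ (X.m ▷ Y.A) ≫ f.f₁ := cHom_spec₁ (MObj.idM X) f
    rw [s, fM, Iso.inv_hom_id_assoc]
  have e2 : (f.f₂ ▷ X.A) ≫ (cHom (MObj.idM X) f).f₂ = (f.f₂ ▷ X.A) ≫ f.f₂ := by
    have s : (f.f₂ ▷ X.A) ≫ (cHom (MObj.idM X) f).f₂
        = (α_ Y.A X.A X.A).hom ≫ (Y.A ◁ X.m) ≫ f.f₂ := cHom_spec₂ (MObj.idM X) f
    rw [s, fM₂]
  exact MHom.ext ((cancel_epi _).1 e1) ((cancel_epi _).1 e2)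

lemma cHom_id_right {X Y : MObj QD} (f : MHom X Y) : cHom f (MObj.idM Y) = f := by
  haveI : Epi (X.A ◁ Y.m) := qEpi (qWL _ Y.mQ)
  haveI : Epi (Y.m ▷ X.A) := qEpi (qWR Y.mQ _)
  have e1 : (X.A ◁ Y.m) ≫ (cHom f (MObj.idM Y)).f₁ = (X.A ◁ Y.m) ≫ f.f₁ := by
    have s : (X.A ◁ Y.m) ≫ (cHom f (MObj.idM Y)).f₁
        = (α_ X.A Y.A Y.A).inv ≫ (f.f₁ ▷ Y.A) ≫ Y.m := cHom_spec₁ f (MObj.idM Y)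
    rw [s, mod₁ f, Iso.inv_hom_id_assoc]
  have e2 : (Y.m ▷ X.A) ≫ (cHom f (MObj.idM Y)).f₂ = (Y.m ▷ X.A) ≫ f.f₂ := by
    have s : (Y.m ▷ X.A) ≫ (cHom f (MObj.idM Y)).f₂
        = (α_ Y.A Y.A X.A).hom ≫ (Y.A ◁ f.f₂) ≫ Y.m := cHom_spec₂ f (MObj.idM Y)
    rw [s, mod₂ f, Iso.hom_inv_id_assoc]
  exact MHom.ext ((cancel_epi _).1 e1) ((cancel_epi _).1 e2)

lemma cHom_assoc {X Y Z W : MObj QD} (f : MHom X Y) (g : MHom Y Z) (h : MHom Z W) :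
    cHom (cHom f g) h = cHom f (cHom g h) := by
  haveI : Epi (X.A ◁ ((g.f₁ ▷ W.A) ≫ h.f₁)) :=
    qEpi (qWL _ (QD.comp_mem _ _ (qWR g.dense₁ _) h.dense₁))
  haveI : Epi (((W.A ◁ g.f₂) ≫ h.f₂) ▷ X.A) :=
    qEpi (qWR (QD.comp_mem _ _ (qWL _ g.dense₂) h.dense₂) _)
  have e1 : (X.A ◁ ((g.f₁ ▷ W.A) ≫ h.f₁)) ≫ (cHom (cHom f g) h).f₁
      = (X.A ◁ ((g.f₁ ▷ W.A) ≫ h.f₁)) ≫ (cHom f (cHom g h)).f₁ := by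
    have eL : (X.A ◁ ((g.f₁ ▷ W.A) ≫ h.f₁)) ≫ (cHom (cHom f g) h).f₁
        = (α_ X.A (Y.A ⊗ Z.A) W.A).inv ≫
            (((α_ X.A Y.A Z.A).inv ≫ (f.f₁ ▷ Z.A) ≫ g.f₁) ▷ W.A) ≫ h.f₁ := by
      calc (X.A ◁ ((g.f₁ ▷ W.A) ≫ h.f₁)) ≫ (cHom (cHom f g) h).f₁
          = (X.A ◁ (g.f₁ ▷ W.A)) ≫ ((X.A ◁ h.f₁) ≫ (cHom (cHom f g) h).f₁) := by
            simp only [MonoidalCategory.whiskerLeft_comp, assoc]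
        _ = (X.A ◁ (g.f₁ ▷ W.A)) ≫ ((α_ X.A Z.A W.A).inv ≫
              ((cHom f g).f₁ ▷ W.A) ≫ h.f₁) := by rw [cHom_spec₁ (cHom f g) h]
        _ = (α_ X.A (Y.A ⊗ Z.A) W.A).inv ≫ ((X.A ◁ g.f₁) ▷ W.A) ≫
              ((cHom f g).f₁ ▷ W.A) ≫ h.f₁ := by rw [associator_inv_naturality_middle_assoc]
        _ = (α_ X.A (Y.A ⊗ Z.A) W.A).inv ≫ (((X.A ◁ g.f₁) ≫ (cHom f g).f₁) ▷ W.A) ≫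
              h.f₁ := by rw [← comp_whiskerRight_assoc]
        _ = (α_ X.A (Y.A ⊗ Z.A) W.A).inv ≫
              (((α_ X.A Y.A Z.A).inv ≫ (f.f₁ ▷ Z.A) ≫ g.f₁) ▷ W.A) ≫ h.f₁ := by
            rw [cHom_spec₁ f g]
    have eR : (X.A ◁ ((g.f₁ ▷ W.A) ≫ h.f₁)) ≫ (cHom f (cHom g h)).f₁
        = (α_ X.A (Y.A ⊗ Z.A) W.A).inv ≫
            (((α_ X.A Y.A Z.A).inv ≫ (f.f₁ ▷ Z.A) ≫ g.f₁) ▷ W.A) ≫ h.f₁ := by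
      have e : (g.f₁ ▷ W.A) ≫ h.f₁
          = (α_ Y.A Z.A W.A).hom ≫ (Y.A ◁ h.f₁) ≫ (cHom g h).f₁ := by
        rw [cHom_spec₁ g h, Iso.hom_inv_id_assoc]
      calc (X.A ◁ ((g.f₁ ▷ W.A) ≫ h.f₁)) ≫ (cHom f (cHom g h)).f₁
          = (X.A ◁ (α_ Y.A Z.A W.A).hom) ≫ (X.A ◁ (Y.A ◁ h.f₁)) ≫
              ((X.A ◁ (cHom g h).f₁) ≫ (cHom f (cHom g h)).f₁) := by
            rw [e]; simp only [MonoidalCategory.whiskerLeft_comp, assoc]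
        _ = (X.A ◁ (α_ Y.A Z.A W.A).hom) ≫ (X.A ◁ (Y.A ◁ h.f₁)) ≫
              ((α_ X.A Y.A W.A).inv ≫ (f.f₁ ▷ W.A) ≫ (cHom g h).f₁) := by
            rw [cHom_spec₁ f (cHom g h)]
        _ = (X.A ◁ (α_ Y.A Z.A W.A).hom) ≫ (α_ X.A Y.A (Z.A ⊗ W.A)).inv ≫
              ((X.A ⊗ Y.A) ◁ h.f₁) ≫ (f.f₁ ▷ W.A) ≫ (cHom g h).f₁ := by
            rw [associator_inv_naturality_right_assoc]
        _ = (X.A ◁ (α_ Y.A Z.A W.A).hom) ≫ (α_ X.A Y.A (Z.A ⊗ W.A)).inv ≫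
              (f.f₁ ▷ (Z.A ⊗ W.A)) ≫ ((Y.A ◁ h.f₁) ≫ (cHom g h).f₁) := by
            rw [whisker_exchange_assoc]
        _ = (X.A ◁ (α_ Y.A Z.A W.A).hom) ≫ (α_ X.A Y.A (Z.A ⊗ W.A)).inv ≫
              (f.f₁ ▷ (Z.A ⊗ W.A)) ≫ ((α_ Y.A Z.A W.A).inv ≫ (g.f₁ ▷ W.A) ≫ h.f₁) := by
            rw [cHom_spec₁ g h]
        _ = (α_ X.A (Y.A ⊗ Z.A) W.A).inv ≫
              (((α_ X.A Y.A Z.A).inv ≫ (f.f₁ ▷ Z.A) ≫ g.f₁) ▷ W.A) ≫ h.f₁ := by monoidal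
    exact eL.trans eR.symm
  have e2 : (((W.A ◁ g.f₂) ≫ h.f₂) ▷ X.A) ≫ (cHom (cHom f g) h).f₂
      = (((W.A ◁ g.f₂) ≫ h.f₂) ▷ X.A) ≫ (cHom f (cHom g h)).f₂ := by
    have eL : (((W.A ◁ g.f₂) ≫ h.f₂) ▷ X.A) ≫ (cHom (cHom f g) h).f₂
        = (α_ W.A (Z.A ⊗ Y.A) X.A).hom ≫
            (W.A ◁ ((α_ Z.A Y.A X.A).hom ≫ (Z.A ◁ f.f₂) ≫ g.f₂)) ≫ h.f₂ := by
      calc (((W.A ◁ g.f₂) ≫ h.f₂) ▷ X.A) ≫ (cHom (cHom f g) h).f₂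
          = ((W.A ◁ g.f₂) ▷ X.A) ≫ ((h.f₂ ▷ X.A) ≫ (cHom (cHom f g) h).f₂) := by
            simp only [MonoidalCategory.comp_whiskerRight, assoc]
        _ = ((W.A ◁ g.f₂) ▷ X.A) ≫ ((α_ W.A Z.A X.A).hom ≫
              (W.A ◁ (cHom f g).f₂) ≫ h.f₂) := by rw [cHom_spec₂ (cHom f g) h]
        _ = (α_ W.A (Z.A ⊗ Y.A) X.A).hom ≫ (W.A ◁ (g.f₂ ▷ X.A)) ≫
              (W.A ◁ (cHom f g).f₂) ≫ h.f₂ := by rw [associator_naturality_middle_assoc]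
        _ = (α_ W.A (Z.A ⊗ Y.A) X.A).hom ≫ (W.A ◁ ((g.f₂ ▷ X.A) ≫ (cHom f g).f₂)) ≫
              h.f₂ := by rw [← MonoidalCategory.whiskerLeft_comp_assoc]
        _ = (α_ W.A (Z.A ⊗ Y.A) X.A).hom ≫
              (W.A ◁ ((α_ Z.A Y.A X.A).hom ≫ (Z.A ◁ f.f₂) ≫ g.f₂)) ≫ h.f₂ := by
            rw [cHom_spec₂ f g]
    have eR : (((W.A ◁ g.f₂) ≫ h.f₂) ▷ X.A) ≫ (cHom f (cHom g h)).f₂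
        = (α_ W.A (Z.A ⊗ Y.A) X.A).hom ≫
            (W.A ◁ ((α_ Z.A Y.A X.A).hom ≫ (Z.A ◁ f.f₂) ≫ g.f₂)) ≫ h.f₂ := by
      have e : (W.A ◁ g.f₂) ≫ h.f₂
          = (α_ W.A Z.A Y.A).inv ≫ (h.f₂ ▷ Y.A) ≫ (cHom g h).f₂ := by
        rw [cHom_spec₂ g h, Iso.inv_hom_id_assoc]
      calc (((W.A ◁ g.f₂) ≫ h.f₂) ▷ X.A) ≫ (cHom f (cHom g h)).f₂
          = ((α_ W.A Z.A Y.A).inv ▷ X.A) ≫ ((h.f₂ ▷ Y.A) ▷ X.A) ≫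
              (((cHom g h).f₂ ▷ X.A) ≫ (cHom f (cHom g h)).f₂) := by
            rw [e]; simp only [MonoidalCategory.comp_whiskerRight, assoc]
        _ = ((α_ W.A Z.A Y.A).inv ▷ X.A) ≫ ((h.f₂ ▷ Y.A) ▷ X.A) ≫
              ((α_ W.A Y.A X.A).hom ≫ (W.A ◁ f.f₂) ≫ (cHom g h).f₂) := by
            rw [cHom_spec₂ f (cHom g h)]
        _ = ((α_ W.A Z.A Y.A).inv ▷ X.A) ≫ (α_ (W.A ⊗ Z.A) Y.A X.A).hom ≫
              (h.f₂ ▷ (Y.A ⊗ X.A)) ≫ (W.A ◁ f.f₂) ≫ (cHom g h).f₂ := by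
            rw [associator_naturality_left_assoc]
        _ = ((α_ W.A Z.A Y.A).inv ▷ X.A) ≫ (α_ (W.A ⊗ Z.A) Y.A X.A).hom ≫
              ((W.A ⊗ Z.A) ◁ f.f₂) ≫ ((h.f₂ ▷ Y.A) ≫ (cHom g h).f₂) := by
            rw [← whisker_exchange_assoc]
        _ = ((α_ W.A Z.A Y.A).inv ▷ X.A) ≫ (α_ (W.A ⊗ Z.A) Y.A X.A).hom ≫
              ((W.A ⊗ Z.A) ◁ f.f₂) ≫ ((α_ W.A Z.A Y.A).hom ≫ (W.A ◁ g.f₂) ≫ h.f₂) := by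
            rw [cHom_spec₂ g h]
        _ = (α_ W.A (Z.A ⊗ Y.A) X.A).hom ≫
              (W.A ◁ ((α_ Z.A Y.A X.A).hom ≫ (Z.A ◁ f.f₂) ≫ g.f₂)) ≫ h.f₂ := by monoidal
    exact eL.trans eR.symm
  exact MHom.ext ((cancel_epi _).1 e1) ((cancel_epi _).1 e2)

/-- The unique morphism from the unit object. -/
def initHom (X : MObj QD) : MHom (MObj.unit QD) X where
  f₁ := (λ_ X.A).hom
  f₂ := (ρ_ X.A).hom
  compat := by
    show ((ρ_ X.A).hom ▷ X.A) ≫ X.m = (α_ X.A (𝟙_ C) X.A).hom ≫ (X.A ◁ (λ_ X.A).hom) ≫ X.m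
    rw [← MonoidalCategory.triangle, assoc]
  mult₁ := by
    show ((λ_ (𝟙_ C)).hom ▷ X.A) ≫ (λ_ X.A).hom
      = (α_ (𝟙_ C) (𝟙_ C) X.A).hom ≫ (𝟙_ C ◁ (λ_ X.A).hom) ≫ (λ_ X.A).hom
    monoidal
  mult₂ := by
    show (α_ X.A (𝟙_ C) (𝟙_ C)).hom ≫ (X.A ◁ (λ_ (𝟙_ C)).hom) ≫ (ρ_ X.A).hom
      = ((ρ_ X.A).hom ▷ 𝟙_ C) ≫ (ρ_ X.A).hom
    monoidal
  dense₁ := QD.iso_mem _ (λ_ X.A).isIso_hom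
  dense₂ := QD.iso_mem _ (ρ_ X.A).isIso_hom

lemma left_unit_unique {A : C} (v : 𝟙_ C ⊗ A ⟶ A) (hv : Epi v)
    (hm : ((λ_ (𝟙_ C)).hom ▷ A) ≫ v = (α_ (𝟙_ C) (𝟙_ C) A).hom ≫ (𝟙_ C ◁ v) ≫ v) :
    v = (λ_ A).hom := by
  have e : (λ_ (𝟙_ C)).hom ▷ A = (α_ (𝟙_ C) (𝟙_ C) A).hom ≫ (𝟙_ C ◁ (λ_ A).hom) := by
    monoidal
  rw [e, assoc, cancel_epi] at hm
  rw [MonoidalCategory.id_whiskerLeft, MonoidalCategory.id_whiskerLeft] at hm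
  simp only [assoc, Iso.hom_inv_id_assoc, cancel_epi] at hm
  -- hm : v ≫ (λ_ A).inv ≫ v = v  (orientation may vary)
  have h : (λ_ A).inv ≫ v = 𝟙 A := by
    haveI := hv
    exact ((cancel_epi v).1 ((comp_id v).trans hm)).symm
  calc v = (λ_ A).hom ≫ (λ_ A).inv ≫ v := by simp
    _ = (λ_ A).hom := by rw [h, comp_id]

lemma right_unit_unique {A : C} (v : A ⊗ 𝟙_ C ⟶ A) (hv : Epi v)
    (hm : (α_ A (𝟙_ C) (𝟙_ C)).hom ≫ (A ◁ (λ_ (𝟙_ C)).hom) ≫ v = (v ▷ 𝟙_ C) ≫ v) :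
    v = (ρ_ A).hom := by
  rw [← assoc, MonoidalCategory.triangle] at hm
  rw [MonoidalCategory.whiskerRight_id, MonoidalCategory.whiskerRight_id] at hm
  simp only [assoc, Iso.hom_inv_id_assoc, cancel_epi] at hm
  have h : (ρ_ A).inv ≫ v = 𝟙 A := by
    haveI := hv
    exact ((cancel_epi v).1 ((comp_id v).trans hm)).symm
  calc v = (ρ_ A).hom ≫ (ρ_ A).inv ≫ v := by simp
    _ = (ρ_ A).hom := by rw [h, comp_id]

lemma initHom_unique {X : MObj QD} (u : MHom (MObj.unit QD) X) : u = initHom X := by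
  have h₁ : u.f₁ = (λ_ X.A).hom :=
    left_unit_unique u.f₁ (qEpi u.dense₁) u.mult₁
  have h₂ : u.f₂ = (ρ_ X.A).hom :=
    right_unit_unique u.f₂ (qEpi u.dense₂) u.mult₂
  exact MHom.ext h₁ h₂

end Aux

/-- Proposition 3.4: there is a category `ℳ` whose objects are the non-degenerate
semigroups with multiplication in `Q` and whose morphisms are the dense multiplicative
`𝕄`-morphisms, with composition `∙` characterized by the equations of (3.1), identities
`i = (m, m)`, and with the monoidal unit (with trivial multiplication) initial. -/
theorem category_M_exists (QD : QData C) :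
    ∃ comp : ∀ {X Y Z : MObj QD}, MHom X Y → MHom Y Z → MHom X Z,
      (∀ (X Y Z : MObj QD) (f : MHom X Y) (g : MHom Y Z),
        ((α_ X.A Y.A Z.A).hom ≫ (X.A ◁ g.f₁) ≫ (comp f g).f₁ = (f.f₁ ▷ Z.A) ≫ g.f₁) ∧
        ((g.f₂ ▷ X.A) ≫ (comp f g).f₂ = (α_ Z.A Y.A X.A).hom ≫ (Z.A ◁ f.f₂) ≫ g.f₂)) ∧
      (∀ (X Y : MObj QD) (f : MHom X Y),
        comp (MObj.idM X) f = f ∧ comp f (MObj.idM Y) = f) ∧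
      (∀ (X Y Z W : MObj QD) (f : MHom X Y) (g : MHom Y Z) (h : MHom Z W),
        comp (comp f g) h = comp f (comp g h)) ∧
      (∀ X : MObj QD, ∃! _u : MHom (MObj.unit QD) X, True) := by
  refine ⟨fun {X Y Z} f g => cHom f g,
    fun X Y Z f g => ⟨?_, cHom_spec₂ f g⟩,
    fun X Y f => ⟨cHom_id_left f, cHom_id_right f⟩,
    fun X Y Z W f g h => cHom_assoc f g h,
    fun X => ⟨initHom X, trivial, fun u _ => initHom_unique u⟩⟩
  rw [cHom_spec₁ f g, Iso.hom_inv_id_assoc]
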